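/- Weighted least squares limit (Lemma on Q_tot* limit, simplified): let U be finite, Q_jt : U → ℝ, ũ ∈ U, and for ε ∈ (0,1] let π_ε : U → ℝ be a family of positive weights, continuous in ε, with π_ε(ũ) → 1 and π_ε(u) → 0 for u ≠ ũ as ε → 0⁺. Let f_ε : U → ℝ be any family minimizing L(f) = Σ_u π_ε(u)(f(u) − Q_jt(u))² over a class of functions that contains all constant functions. Then lim_{ε→0⁺} f_ε(ũ) = Q_jt(ũ). -/

import Mathlib

open Filter Topology

/-- Weighted least-squares limit: minimizers over a class containing all constants
    converge at `ũ` to `Qjt ũ` as the weight concentrates on `ũ`. -/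
theorem stmt_7 {U : Type*} [Fintype U] [Nonempty U]
    (Qjt : U → ℝ) (ut : U)
    (π : ℝ → U → ℝ)
    (hpos : ∀ ε ∈ Set.Ioc (0:ℝ) 1, ∀ u, 0 < π ε u)
    (hcont : ∀ u, ContinuousOn (fun ε => π ε u) (Set.Ioc (0:ℝ) 1))
    (hlim1 : Tendsto (fun ε => π ε ut) (𝓝[>] (0:ℝ)) (𝓝 1))
    (hlim0 : ∀ u, u ≠ ut → Tendsto (fun ε => π ε u) (𝓝[>] (0:ℝ)) (𝓝 0))
    (F : Set (U → ℝ)) (hF : ∀ c : ℝ, (fun _ => c) ∈ F)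
    (f : ℝ → U → ℝ) (hfF : ∀ ε ∈ Set.Ioc (0:ℝ) 1, f ε ∈ F)
    (hmin : ∀ ε ∈ Set.Ioc (0:ℝ) 1, ∀ g ∈ F,
      ∑ u, π ε u * (f ε u - Qjt u) ^ 2 ≤ ∑ u, π ε u * (g u - Qjt u) ^ 2) :
    Tendsto (fun ε => f ε ut) (𝓝[>] (0:ℝ)) (𝓝 (Qjt ut)) := by
  set B : ℝ → ℝ := fun ε => ∑ u, π ε u * (Qjt ut - Qjt u) ^ 2 with hB
  -- B tends to 0
  have hBlim : Tendsto B (𝓝[>] (0:ℝ)) (𝓝 0) := by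
    have : Tendsto B (𝓝[>] (0:ℝ)) (𝓝 (∑ u : U, (0:ℝ))) := by
      apply tendsto_finset_sum
      intro u _
      by_cases h : u = ut
      · subst h
        simpa using (hlim1.mul (tendsto_const_nhds (x := (Qjt u - Qjt u) ^ 2)))
      · simpa using ((hlim0 u h).mul (tendsto_const_nhds (x := (Qjt ut - Qjt u) ^ 2)))
    simpa using this
  -- eventually ε ∈ Ioc 0 1
  have hev : ∀ᶠ ε in 𝓝[>] (0:ℝ), ε ∈ Set.Ioc (0:ℝ) 1 := by
    have h1 : ∀ᶠ ε in 𝓝[>] (0:ℝ), ε ≤ 1 := by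
      filter_upwards [eventually_nhdsWithin_of_eventually_nhds
        (Filter.Tendsto.eventually_le_const (by norm_num : (0:ℝ) < 1) (tendsto_id))] with x hx using hx
    filter_upwards [h1, self_mem_nhdsWithin] with x hx hx' using ⟨hx', hx⟩
  -- key bound: π ε ut * (f ε ut - Qjt ut)^2 ≤ B ε
  have hkey : ∀ᶠ ε in 𝓝[>] (0:ℝ),
      π ε ut * (f ε ut - Qjt ut) ^ 2 ≤ B ε := by
    filter_upwards [hev] with ε hε
    have h1 : π ε ut * (f ε ut - Qjt ut) ^ 2 ≤ ∑ u, π ε u * (f ε u - Qjt u) ^ 2 := by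
      apply Finset.single_le_sum (f := fun u => π ε u * (f ε u - Qjt u) ^ 2)
      · intro u _
        exact mul_nonneg (hpos ε hε u).le (sq_nonneg _)
      · exact Finset.mem_univ ut
    exact h1.trans (hmin ε hε _ (hF (Qjt ut)))
  -- squeeze: (f ε ut - Qjt ut)^2 → 0
  have hsq : Tendsto (fun ε => (f ε ut - Qjt ut) ^ 2) (𝓝[>] (0:ℝ)) (𝓝 0) := by
    have hupper : ∀ᶠ ε in 𝓝[>] (0:ℝ),
        (f ε ut - Qjt ut) ^ 2 ≤ B ε / π ε ut := by
      filter_upwards [hkey, hev] with ε h1 h2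
      rw [le_div_iff₀ (hpos ε h2 ut)]
      linarith [h1]
    have hlower : ∀ᶠ ε in 𝓝[>] (0:ℝ), (0:ℝ) ≤ (f ε ut - Qjt ut) ^ 2 :=
      Eventually.of_forall fun ε => sq_nonneg _
    have hdiv : Tendsto (fun ε => B ε / π ε ut) (𝓝[>] (0:ℝ)) (𝓝 0) := by
      have := hBlim.div hlim1 (by norm_num); simp only [div_one] at this; exact this
    exact tendsto_of_tendsto_of_tendsto_of_le_of_le' tendsto_const_nhds hdiv hlower hupper
  -- conclude
  have habs : Tendsto (fun ε => f ε ut - Qjt ut) (𝓝[>] (0:ℝ)) (𝓝 0) := by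
    have : Tendsto (fun ε => |f ε ut - Qjt ut|) (𝓝[>] (0:ℝ)) (𝓝 0) := by
      have h2 := (Real.continuous_sqrt.tendsto 0).comp hsq
      rw [Real.sqrt_zero] at h2
      have heq : (fun ε => |f ε ut - Qjt ut|)
          = (Real.sqrt ∘ fun ε => (f ε ut - Qjt ut) ^ 2) := by
        funext ε; simp [Function.comp, Real.sqrt_sq_eq_abs]
      rw [heq]; exact h2
    exact tendsto_zero_iff_abs_tendsto_zero _ |>.mpr this
  have := habs.add (tendsto_const_nhds (x := Qjt ut) (f := 𝓝[>] (0:ℝ)))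
  simpa using this
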